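/- By the triangle inequality for discrepancy, with probability at least 1 − δ over samples S (size m, from Q) and T (size n, from P), disc_{Lq}(P, Q) ≤ disc_{Lq}(P̂, Q̂) + 4q(R̂_S(H) + R̂_T(H)) + 3M(√(log(4/δ)/(2m)) + √(log(4/δ)/(2n))). -/

import Mathlib

open MeasureTheory ProbabilityTheory
open scoped BigOperators

/-- Empirical Rademacher complexity of a class `F` of real-valued functions
on a sample `S`. -/
noncomputable def empRad {Z : Type*} (m : ℕ) (S : Fin m → Z) (F : Set (Z → ℝ)) : ℝ :=
  (2 / (m : ℝ)) * ((1 / 2 ^ m) * ∑ σ : Fin m → Bool,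
    ⨆ f : F, |∑ i, (if σ i then (1 : ℝ) else -1) * (f : Z → ℝ) (S i)|)


lemma exp_le_add_exp_sq (u : ℝ) : Real.exp u ≤ u + Real.exp (u ^ 2) := by
  rcases le_or_gt u 0 with h | h
  · have h1 : Real.exp u ≤ (1 - u)⁻¹ := by
      have h0 := Real.add_one_le_exp (-u)
      have h0' : (0:ℝ) < 1 - u := by linarith
      rw [show Real.exp u = (Real.exp (-u))⁻¹ by rw [Real.exp_neg, inv_inv]]
      exact inv_anti₀ h0' (by linarith)
    have h2 : 1 + u ^ 2 ≤ Real.exp (u ^ 2) := by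
      have := Real.add_one_le_exp (u ^ 2); linarith
    have h3 : (1 - u)⁻¹ ≤ u + (1 + u ^ 2) := by
      rw [inv_le_iff_one_le_mul₀ (by linarith)]
      nlinarith
    linarith
  · rcases le_or_gt u 1 with h1 | h1
    · have hb := Real.exp_bound (x := u) (by rw [abs_of_pos h]; exact h1) (n := 2) (by norm_num)
      have hsum : ∑ i ∈ Finset.range 2, u ^ i / (i.factorial : ℝ) = 1 + u := by
        simp [Finset.sum_range_succ]
      rw [hsum] at hb
      have h2 : Real.exp u - (1 + u) ≤ |u| ^ 2 * ((2 : ℕ).succ / ((2).factorial * 2) : ℝ) :=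
        le_trans (le_abs_self _) hb
      rw [abs_of_pos h] at h2
      have h3 : 1 + u + u ^ 2 ≤ u + Real.exp (u ^ 2) := by
        have := Real.add_one_le_exp (u ^ 2); linarith
      have : ((2 : ℕ).succ / ((2 : ℕ).factorial * 2) : ℝ) = 3 / 4 := by
        norm_num [Nat.factorial]
      rw [this] at h2
      nlinarith
    · have : Real.exp u ≤ Real.exp (u ^ 2) := by
        apply Real.exp_le_exp.2; nlinarith
      linarith


lemma mgf_bound {X : Type*} [MeasurableSpace X] (P : Measure X) [IsProbabilityMeasure P]
    (f : X → ℝ) (hf : Measurable f) (M lam : ℝ) (hbd : ∀ x, |f x| ≤ M)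
    (hmean : ∫ x, f x ∂P = 0) :
    ∫ x, Real.exp (lam * f x) ∂P ≤ Real.exp (lam ^ 2 * M ^ 2) := by
  have hint1 : Integrable f P := by
    refine Integrable.mono' (integrable_const M) hf.aestronglyMeasurable ?_
    exact ae_of_all _ hbd
  have hintexp : Integrable (fun x => Real.exp (lam * f x)) P := by
    refine Integrable.mono' (integrable_const (Real.exp (|lam| * M))) ?_ ?_
    · exact (Real.measurable_exp.comp (hf.const_mul lam)).aestronglyMeasurable
    · refine ae_of_all _ fun x => ?_
      rw [Real.norm_eq_abs, abs_of_pos (Real.exp_pos _)]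
      apply Real.exp_le_exp.2
      calc lam * f x ≤ |lam * f x| := le_abs_self _
        _ = |lam| * |f x| := abs_mul _ _
        _ ≤ |lam| * M := by
            apply mul_le_mul_of_nonneg_left (hbd x) (abs_nonneg _)
  have hb : ∀ x, Real.exp (lam * f x) ≤ lam * f x + Real.exp (lam ^ 2 * M ^ 2) := by
    intro x
    calc Real.exp (lam * f x) ≤ lam * f x + Real.exp ((lam * f x) ^ 2) := exp_le_add_exp_sq _
      _ ≤ lam * f x + Real.exp (lam ^ 2 * M ^ 2) := by
          gcongr
          have h1 : |f x| ≤ M := hbd x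
          have h2 : (f x) ^ 2 ≤ M ^ 2 := by nlinarith [abs_nonneg (f x), le_abs_self (f x), neg_abs_le (f x)]
          calc (lam * f x) ^ 2 = lam ^ 2 * (f x) ^ 2 := by ring
            _ ≤ lam ^ 2 * M ^ 2 := by nlinarith [sq_nonneg lam]
  calc ∫ x, Real.exp (lam * f x) ∂P ≤ ∫ x, (lam * f x + Real.exp (lam ^ 2 * M ^ 2)) ∂P := by
        refine integral_mono hintexp ?_ hb
        exact (hint1.const_mul lam).add (integrable_const _)
    _ = lam * (∫ x, f x ∂P) + Real.exp (lam ^ 2 * M ^ 2) := by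
        rw [integral_add (hint1.const_mul lam) (integrable_const _), MeasureTheory.integral_const_mul]
        simp [measure_univ]
    _ = Real.exp (lam ^ 2 * M ^ 2) := by rw [hmean]; ring


lemma hoeffding_tail {X : Type*} [MeasurableSpace X] (P : Measure X) [IsProbabilityMeasure P]
    (f : X → ℝ) (hf : Measurable f) (M : ℝ) (hM : 0 < M) (hbd : ∀ x, |f x| ≤ M)
    (hmean : ∫ x, f x ∂P = 0) (n : ℕ) (t : ℝ) (ht : 0 ≤ t) :
    (Measure.pi fun _ : Fin n => P) {T | t * n ≤ ∑ j, f (T j)}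
      ≤ ENNReal.ofReal (Real.exp (-(n * t ^ 2) / (4 * M ^ 2))) := by
  set μ : Measure (Fin n → X) := Measure.pi fun _ : Fin n => P with hμ
  haveI : IsProbabilityMeasure μ := by rw [hμ]; infer_instance
  set lam : ℝ := t / (2 * M ^ 2) with hlam
  have hlam0 : 0 ≤ lam := by positivity
  set W : (Fin n → X) → ℝ := fun T => ∑ j, f (T j) with hW
  have hWmeas : Measurable W := by
    apply Finset.measurable_sum
    exact fun j _ => hf.comp (measurable_pi_apply j)
  have hint : Integrable (fun T => Real.exp (lam * W T)) μ := by
    refine Integrable.mono' (integrable_const (Real.exp (lam * (n * M)))) ?_ ?_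
    · exact (Real.measurable_exp.comp (hWmeas.const_mul lam)).aestronglyMeasurable
    · refine ae_of_all _ fun T => ?_
      rw [Real.norm_eq_abs, abs_of_pos (Real.exp_pos _)]
      apply Real.exp_le_exp.2
      apply mul_le_mul_of_nonneg_left _ hlam0
      calc W T ≤ |W T| := le_abs_self _
        _ ≤ ∑ j : Fin n, |f (T j)| := Finset.abs_sum_le_sum_abs _ _
        _ ≤ ∑ _j : Fin n, M := Finset.sum_le_sum fun j _ => hbd (T j)
        _ = n * M := by simp [mul_comm]
  have hchern := measure_ge_le_exp_mul_mgf (X := W) (μ := μ) (t := lam) (t * n) hlam0 hint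
  have hmgf : mgf W μ lam ≤ Real.exp (n * (lam ^ 2 * M ^ 2)) := by
    have hprod : mgf W μ lam = (∫ x, Real.exp (lam * f x) ∂P) ^ n := by
      letI : MeasureSpace X := ⟨P⟩
      have hvol : (volume : Measure (Fin n → X)) = μ := rfl
      rw [mgf, ← hvol]
      have : ∀ T : Fin n → X, Real.exp (lam * W T) = ∏ j : Fin n, Real.exp (lam * f (T j)) := by
        intro T
        rw [← Real.exp_sum, Finset.mul_sum]
      calc ∫ T, Real.exp (lam * W T) ∂(volume : Measure (Fin n → X))
          = ∫ T : Fin n → X, ∏ j, Real.exp (lam * f (T j)) := by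
            exact integral_congr_ae (ae_of_all _ this)
        _ = (∫ x, Real.exp (lam * f x)) ^ (Fintype.card (Fin n)) :=
            MeasureTheory.integral_fintype_prod_eq_pow (fun x => Real.exp (lam * f x))
        _ = (∫ x, Real.exp (lam * f x) ∂P) ^ n := by rw [Fintype.card_fin]; rfl
    rw [hprod]
    have h1 : (0:ℝ) ≤ ∫ x, Real.exp (lam * f x) ∂P :=
      integral_nonneg fun x => (Real.exp_pos _).le
    calc (∫ x, Real.exp (lam * f x) ∂P) ^ n ≤ (Real.exp (lam ^ 2 * M ^ 2)) ^ n := by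
          apply pow_le_pow_left₀ h1 (mgf_bound P f hf M lam hbd hmean)
      _ = Real.exp (n * (lam ^ 2 * M ^ 2)) := (Real.exp_nat_mul _ n).symm
  have hexp : Real.exp (-lam * (t * n)) * Real.exp (n * (lam ^ 2 * M ^ 2))
      = Real.exp (-(n * t ^ 2) / (4 * M ^ 2)) := by
    rw [← Real.exp_add]
    congr 1
    rw [hlam]
    field_simp
    ring
  have hfin : μ {T | t * n ≤ W T} ≠ ⊤ := measure_ne_top _ _
  rw [← ENNReal.ofReal_toReal hfin]
  apply ENNReal.ofReal_le_ofReal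
  calc (μ {T | t * n ≤ W T}).toReal ≤ Real.exp (-lam * (t * n)) * mgf W μ lam := hchern
    _ ≤ Real.exp (-lam * (t * n)) * Real.exp (n * (lam ^ 2 * M ^ 2)) := by
        apply mul_le_mul_of_nonneg_left hmgf (Real.exp_pos _).le
    _ = _ := hexp


lemma emp_dev {X : Type*} [MeasurableSpace X] (P : Measure X) [IsProbabilityMeasure P]
    (g : X → ℝ) (hg : Measurable g) (M : ℝ) (hM : 0 < M)
    (h0 : ∀ x, 0 ≤ g x) (h1 : ∀ x, g x ≤ M)
    (n : ℕ) (hn : 0 < n) (c : ℝ) (hc : 0 ≤ c) :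
    (Measure.pi fun _ : Fin n => P) {T | c ≤ |(1/(n:ℝ)) * ∑ j, g (T j) - ∫ x, g x ∂P|}
      ≤ 2 * ENNReal.ofReal (Real.exp (-(n * c ^ 2) / (4 * M ^ 2))) := by
  have hgint : Integrable g P := by
    refine Integrable.mono' (integrable_const M) hg.aestronglyMeasurable ?_
    refine ae_of_all _ fun x => ?_
    rw [Real.norm_eq_abs, abs_of_nonneg (h0 x)]; exact h1 x
  set gm : ℝ := ∫ x, g x ∂P with hgm
  have hgm0 : 0 ≤ gm := integral_nonneg h0
  have hgmM : gm ≤ M := by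
    calc gm ≤ ∫ _, M ∂P := integral_mono hgint (integrable_const M) h1
      _ = M := by simp
  set f : X → ℝ := fun x => g x - gm with hf
  have hfmeas : Measurable f := hg.sub measurable_const
  have hfbd : ∀ x, |f x| ≤ M := by
    intro x; rw [abs_le]; constructor <;> simp only [hf] <;> nlinarith [h0 x, h1 x]
  have hfmean : ∫ x, f x ∂P = 0 := by
    simp only [hf]
    rw [integral_sub hgint (integrable_const gm)]
    simp [hgm]
  have hfmean' : ∫ x, (-f) x ∂P = 0 := by
    rw [integral_neg']; rw [hfmean]; simp
  have hsub : {T : Fin n → X | c ≤ |(1/(n:ℝ)) * ∑ j, g (T j) - gm|}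
      ⊆ {T | c * n ≤ ∑ j, f (T j)} ∪ {T | c * n ≤ ∑ j, (-f) (T j)} := by
    intro T hT
    simp only [Set.mem_setOf_eq] at hT
    have hrw : (1/(n:ℝ)) * ∑ j, g (T j) - gm = (1/(n:ℝ)) * ∑ j, f (T j) := by
      simp only [hf]
      rw [Finset.sum_sub_distrib, Finset.sum_const]
      simp only [Finset.card_univ, Fintype.card_fin, nsmul_eq_mul]
      field_simp
    rw [hrw] at hT
    have hn' : (0:ℝ) < n := by exact_mod_cast hn
    have habs : c * n ≤ |∑ j, f (T j)| := by
      rw [abs_mul, abs_of_pos (by positivity : (0:ℝ) < 1/(n:ℝ))] at hT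
      calc c * n ≤ (1/(n:ℝ) * |∑ j, f (T j)|) * n := by
            apply mul_le_mul_of_nonneg_right hT hn'.le
        _ = |∑ j, f (T j)| := by field_simp
    rcases le_abs.1 habs with h | h
    · exact Or.inl h
    · refine Or.inr ?_
      simp only [Set.mem_setOf_eq, Pi.neg_apply]
      rw [← Finset.sum_neg_distrib] at h
      exact h.trans_eq (by simp)
  calc (Measure.pi fun _ : Fin n => P) {T | c ≤ |(1/(n:ℝ)) * ∑ j, g (T j) - gm|}
      ≤ (Measure.pi fun _ : Fin n => P) ({T | c * n ≤ ∑ j, f (T j)} ∪ {T | c * n ≤ ∑ j, (-f) (T j)}) :=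
        measure_mono hsub
    _ ≤ (Measure.pi fun _ : Fin n => P) {T | c * n ≤ ∑ j, f (T j)}
        + (Measure.pi fun _ : Fin n => P) {T | c * n ≤ ∑ j, (-f) (T j)} := measure_union_le _ _
    _ ≤ ENNReal.ofReal (Real.exp (-(n * c ^ 2) / (4 * M ^ 2)))
        + ENNReal.ofReal (Real.exp (-(n * c ^ 2) / (4 * M ^ 2))) := by
        gcongr
        · exact hoeffding_tail P f hfmeas M hM hfbd hfmean n c hc
        · refine hoeffding_tail P (-f) hfmeas.neg M hM ?_ hfmean' n c hc
          intro x; rw [Pi.neg_apply, abs_neg]; exact hfbd x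
    _ = 2 * ENNReal.ofReal (Real.exp (-(n * c ^ 2) / (4 * M ^ 2))) := (two_mul _).symm


lemma empRad_nonneg {Z : Type*} (m : ℕ) (S : Fin m → Z) (F : Set (Z → ℝ)) :
    0 ≤ empRad m S F := by
  unfold empRad
  apply mul_nonneg (by positivity)
  apply mul_nonneg (by positivity)
  exact Finset.sum_nonneg fun σ _ => Real.iSup_nonneg fun f => abs_nonneg _


lemma avg_bounds {k : ℕ} (hk : 0 < k) (M : ℝ) (w : Fin k → ℝ)
    (h0 : ∀ i, 0 ≤ w i) (h1 : ∀ i, w i ≤ M) :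
    0 ≤ 1/(k:ℝ) * ∑ i, w i ∧ 1/(k:ℝ) * ∑ i, w i ≤ M := by
  have hk' : (0:ℝ) < k := by exact_mod_cast hk
  constructor
  · exact mul_nonneg (by positivity) (Finset.sum_nonneg fun i _ => h0 i)
  · have hs : ∑ i, w i ≤ (k:ℝ) * M := by
      calc ∑ i, w i ≤ ∑ _i : Fin k, M := Finset.sum_le_sum fun i _ => h1 i
        _ = (k:ℝ) * M := by simp [Finset.sum_const, mul_comm]
    calc 1/(k:ℝ) * ∑ i, w i ≤ 1/(k:ℝ) * ((k:ℝ) * M) :=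
          mul_le_mul_of_nonneg_left hs (by positivity)
      _ = M := by field_simp


theorem disc_Lq_two_sample_bound {X : Type*} [MeasurableSpace X]
    (Q P : Measure X) [IsProbabilityMeasure Q] [IsProbabilityMeasure P]
    (H : Set (X → ℝ)) (hmeas : ∀ h ∈ H, Measurable h)
    (hrange : ∀ h ∈ H, ∀ x, h x ∈ Set.Icc (0 : ℝ) 1)
    (q : ℕ) (hq : 1 ≤ q) (M : ℝ) (hM : 0 < M)
    (hbd : ∀ h ∈ H, ∀ h' ∈ H, ∀ x, |h x - h' x| ^ q ≤ M)
    (m n : ℕ) (hm : 0 < m) (hn : 0 < n) (δ : ℝ) (hδ : 0 < δ) (hδ1 : δ < 1) :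
    ENNReal.ofReal (1 - δ) ≤
      ((Measure.pi fun _ : Fin m => Q).prod (Measure.pi fun _ : Fin n => P))
        {ST : (Fin m → X) × (Fin n → X) |
          (⨆ p : H × H,
            |(∫ x, |(p.1 : X → ℝ) x - (p.2 : X → ℝ) x| ^ q ∂P) -
              ∫ x, |(p.1 : X → ℝ) x - (p.2 : X → ℝ) x| ^ q ∂Q|) ≤
            (⨆ p : H × H,
              |(1 / (n : ℝ)) * (∑ j, |(p.1 : X → ℝ) (ST.2 j) - (p.2 : X → ℝ) (ST.2 j)| ^ q) -
                (1 / (m : ℝ)) * ∑ i, |(p.1 : X → ℝ) (ST.1 i) - (p.2 : X → ℝ) (ST.1 i)| ^ q|) +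
              4 * q * (empRad m ST.1 H + empRad n ST.2 H) +
              3 * M * (Real.sqrt (Real.log (4 / δ) / (2 * m)) +
                Real.sqrt (Real.log (4 / δ) / (2 * n)))} := by
  have hlog : 0 < Real.log (4 / δ) := Real.log_pos (by rw [lt_div_iff₀ hδ]; linarith)
  have hm' : (0:ℝ) < m := by exact_mod_cast hm
  have hn' : (0:ℝ) < n := by exact_mod_cast hn
  set sm : ℝ := Real.sqrt (Real.log (4 / δ) / (2 * m)) with hsm
  set sn : ℝ := Real.sqrt (Real.log (4 / δ) / (2 * n)) with hsn
  have hsm0 : 0 < sm := Real.sqrt_pos.2 (by positivity)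
  have hsn0 : 0 < sn := Real.sqrt_pos.2 (by positivity)
  -- basic nonnegativity facts about the RHS
  have hRadRHS : ∀ ST : (Fin m → X) × (Fin n → X),
      0 ≤ 4 * (q:ℝ) * (empRad m ST.1 H + empRad n ST.2 H) := by
    intro ST
    apply mul_nonneg (by positivity)
    exact add_nonneg (empRad_nonneg _ _ _) (empRad_nonneg _ _ _)
  rcases isEmpty_or_nonempty (↥H) with hH | hH
  · -- H empty: the event is everything
    haveI : IsEmpty (↥H × ↥H) := inferInstance
    have hev : {ST : (Fin m → X) × (Fin n → X) |
          (⨆ p : H × H,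
            |(∫ x, |(p.1 : X → ℝ) x - (p.2 : X → ℝ) x| ^ q ∂P) -
              ∫ x, |(p.1 : X → ℝ) x - (p.2 : X → ℝ) x| ^ q ∂Q|) ≤
            (⨆ p : H × H,
              |(1 / (n : ℝ)) * (∑ j, |(p.1 : X → ℝ) (ST.2 j) - (p.2 : X → ℝ) (ST.2 j)| ^ q) -
                (1 / (m : ℝ)) * ∑ i, |(p.1 : X → ℝ) (ST.1 i) - (p.2 : X → ℝ) (ST.1 i)| ^ q|) +
              4 * q * (empRad m ST.1 H + empRad n ST.2 H) +
              3 * M * (sm + sn)} = Set.univ := by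
      rw [Set.eq_univ_iff_forall]
      intro ST
      simp only [Set.mem_setOf_eq]
      rw [Real.iSup_of_isEmpty _]
      have h1 : 0 ≤ (⨆ p : H × H,
          |(1 / (n : ℝ)) * (∑ j, |(p.1 : X → ℝ) (ST.2 j) - (p.2 : X → ℝ) (ST.2 j)| ^ q) -
            (1 / (m : ℝ)) * ∑ i, |(p.1 : X → ℝ) (ST.1 i) - (p.2 : X → ℝ) (ST.1 i)| ^ q|) :=
        Real.iSup_nonneg fun p => abs_nonneg _
      have h2 := hRadRHS ST
      nlinarith [hsm0, hsn0, hM]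
    rw [hev]
    rw [measure_univ]
    exact ENNReal.ofReal_le_one.2 (by linarith)
  · -- H nonempty
    have hsm2 : sm ^ 2 = Real.log (4 / δ) / (2 * m) := Real.sq_sqrt (by positivity)
    have hsn2 : sn ^ 2 = Real.log (4 / δ) / (2 * n) := Real.sq_sqrt (by positivity)
    haveI : Nonempty (↥H × ↥H) := inferInstance
    set D : ℝ := ⨆ p : H × H,
        |(∫ x, |(p.1 : X → ℝ) x - (p.2 : X → ℝ) x| ^ q ∂P) -
          ∫ x, |(p.1 : X → ℝ) x - (p.2 : X → ℝ) x| ^ q ∂Q| with hD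
    set ε : ℝ := (1/10) * M * (sm + sn) with hε
    have hε0 : 0 < ε := by positivity
    obtain ⟨p0, hp0⟩ := exists_lt_of_lt_ciSup (show D - ε < D by linarith)
    set L : X → ℝ := fun x => |(p0.1 : X → ℝ) x - (p0.2 : X → ℝ) x| ^ q with hLdef
    have hLmeas : Measurable L :=
      (((hmeas _ p0.1.2).sub (hmeas _ p0.2.2)).abs).pow_const q
    have hL0 : ∀ x, 0 ≤ L x := fun x => pow_nonneg (abs_nonneg _) q
    have hLM : ∀ x, L x ≤ M := fun x => hbd _ p0.1.2 _ p0.2.2 x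
    set cm : ℝ := (29/10) * M * sm with hcm
    set cn : ℝ := (29/10) * M * sn with hcn
    have hcm0 : 0 ≤ cm := by positivity
    have hcn0 : 0 ≤ cn := by positivity
    set A : Set (Fin m → X) := {S | cm ≤ |(1/(m:ℝ)) * ∑ i, L (S i) - ∫ x, L x ∂Q|} with hA
    set B : Set (Fin n → X) := {T | cn ≤ |(1/(n:ℝ)) * ∑ j, L (T j) - ∫ x, L x ∂P|} with hB
    have hAmeas : MeasurableSet A := by
      apply measurableSet_le measurable_const
      apply Measurable.abs
      apply Measurable.sub _ measurable_const
      exact (Finset.measurable_sum _ fun i _ =>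
        hLmeas.comp (measurable_pi_apply i)).const_mul _
    have hBmeas : MeasurableSet B := by
      apply measurableSet_le measurable_const
      apply Measurable.abs
      apply Measurable.sub _ measurable_const
      exact (Finset.measurable_sum _ fun j _ =>
        hLmeas.comp (measurable_pi_apply j)).const_mul _
    -- tail bounds
    have htail : ∀ (k : ℕ) (c : ℝ) (s : ℝ), 0 < k → c = (29/10) * M * s →
        s ^ 2 = Real.log (4 / δ) / (2 * k) →
        2 * ENNReal.ofReal (Real.exp (-((k:ℝ) * c ^ 2) / (4 * M ^ 2)))
          ≤ ENNReal.ofReal (δ/2) := by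
      intro k c s hk hc hs
      have hk' : (0:ℝ) < k := by exact_mod_cast hk
      have h1 : -((k:ℝ) * c ^ 2) / (4 * M ^ 2) ≤ -Real.log (4 / δ) := by
        have h2 : (k:ℝ) * c ^ 2 / (4 * M ^ 2) = (841/800) * Real.log (4/δ) := by
          rw [hc, mul_pow, mul_pow, hs]
          field_simp
          ring
        have h3 : -((k:ℝ) * c ^ 2) / (4 * M ^ 2) = -((841:ℝ)/800 * Real.log (4/δ)) := by
          rw [neg_div, h2]
        rw [h3]
        linarith
      have h4 : Real.exp (-((k:ℝ) * c ^ 2) / (4 * M ^ 2)) ≤ δ/4 := by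
        calc Real.exp (-((k:ℝ) * c ^ 2) / (4 * M ^ 2)) ≤ Real.exp (-Real.log (4/δ)) :=
              Real.exp_le_exp.2 h1
          _ = δ/4 := by
              rw [Real.exp_neg, Real.exp_log (by positivity), inv_div]
      calc 2 * ENNReal.ofReal (Real.exp (-((k:ℝ) * c ^ 2) / (4 * M ^ 2)))
          ≤ 2 * ENNReal.ofReal (δ/4) := by
            gcongr
        _ = ENNReal.ofReal (δ/4) + ENNReal.ofReal (δ/4) := two_mul _
        _ = ENNReal.ofReal (δ/2) := by
            rw [← ENNReal.ofReal_add (by positivity) (by positivity),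
              show δ/4 + δ/4 = δ/2 by ring]
    have hQA : (Measure.pi fun _ : Fin m => Q) A ≤ ENNReal.ofReal (δ/2) :=
      le_trans (emp_dev Q L hLmeas M hM hL0 hLM m hm cm hcm0)
        (htail m cm sm hm hcm hsm2)
    have hPB : (Measure.pi fun _ : Fin n => P) B ≤ ENNReal.ofReal (δ/2) :=
      le_trans (emp_dev P L hLmeas M hM hL0 hLM n hn cn hcn0)
        (htail n cn sn hn hcn hsn2)
    have hQAc : ENNReal.ofReal (1 - δ/2) ≤ (Measure.pi fun _ : Fin m => Q) Aᶜ := by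
      rw [prob_compl_eq_one_sub hAmeas, ← ENNReal.ofReal_one,
        ENNReal.ofReal_sub _ (by positivity)]
      exact tsub_le_tsub_left hQA _
    have hPBc : ENNReal.ofReal (1 - δ/2) ≤ (Measure.pi fun _ : Fin n => P) Bᶜ := by
      rw [prob_compl_eq_one_sub hBmeas, ← ENNReal.ofReal_one,
        ENNReal.ofReal_sub _ (by positivity)]
      exact tsub_le_tsub_left hPB _
    -- inclusion
    have hsub : Aᶜ ×ˢ Bᶜ ⊆
        {ST : (Fin m → X) × (Fin n → X) |
          D ≤ (⨆ p : H × H,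
                |(1 / (n : ℝ)) * (∑ j, |(p.1 : X → ℝ) (ST.2 j) - (p.2 : X → ℝ) (ST.2 j)| ^ q) -
                  (1 / (m : ℝ)) * ∑ i, |(p.1 : X → ℝ) (ST.1 i) - (p.2 : X → ℝ) (ST.1 i)| ^ q|) +
                4 * q * (empRad m ST.1 H + empRad n ST.2 H) + 3 * M * (sm + sn)} := by
      intro ST hST
      obtain ⟨hS, hT⟩ := hST
      rw [Set.mem_compl_iff, hA, Set.mem_setOf_eq, not_le] at hS
      rw [Set.mem_compl_iff, hB, Set.mem_setOf_eq, not_le] at hT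
      rw [Set.mem_setOf_eq]
      set Ehat : ℝ := ⨆ p : H × H,
          |(1 / (n : ℝ)) * (∑ j, |(p.1 : X → ℝ) (ST.2 j) - (p.2 : X → ℝ) (ST.2 j)| ^ q) -
            (1 / (m : ℝ)) * ∑ i, |(p.1 : X → ℝ) (ST.1 i) - (p.2 : X → ℝ) (ST.1 i)| ^ q| with hEhat
      set R : ℝ := empRad m ST.1 H + empRad n ST.2 H with hR
      set En : ℝ := (1/(n:ℝ)) * ∑ j, L (ST.2 j) with hEn
      set Em : ℝ := (1/(m:ℝ)) * ∑ i, L (ST.1 i) with hEm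
      set IP : ℝ := ∫ x, L x ∂P with hIP
      set IQ : ℝ := ∫ x, L x ∂Q with hIQ
      have hbdd : BddAbove (Set.range (fun p : ↥H × ↥H =>
          |(1 / (n : ℝ)) * (∑ j, |(p.1 : X → ℝ) (ST.2 j) - (p.2 : X → ℝ) (ST.2 j)| ^ q) -
            (1 / (m : ℝ)) * ∑ i, |(p.1 : X → ℝ) (ST.1 i) - (p.2 : X → ℝ) (ST.1 i)| ^ q|)) := by
        refine ⟨2 * M, ?_⟩
        rintro x ⟨p, rfl⟩
        have hn2 := avg_bounds hn M (fun j => |(p.1 : X → ℝ) (ST.2 j) - (p.2 : X → ℝ) (ST.2 j)| ^ q)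
          (fun j => pow_nonneg (abs_nonneg _) q) (fun j => hbd _ p.1.2 _ p.2.2 _)
        have hm2 := avg_bounds hm M (fun i => |(p.1 : X → ℝ) (ST.1 i) - (p.2 : X → ℝ) (ST.1 i)| ^ q)
          (fun i => pow_nonneg (abs_nonneg _) q) (fun i => hbd _ p.1.2 _ p.2.2 _)
        rw [abs_sub_le_iff]
        constructor <;> [skip; skip] <;>
          · obtain ⟨ha, hb⟩ := hn2; obtain ⟨hc', hd⟩ := hm2; linarith
      have hEsup : |En - Em| ≤ Ehat := le_ciSup hbdd p0
      have htri : |IP - IQ| ≤ |En - IP| + |En - Em| + |Em - IQ| := by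
        calc |IP - IQ| ≤ |IP - En| + |En - IQ| := abs_sub_le IP En IQ
          _ ≤ |IP - En| + (|En - Em| + |Em - IQ|) := by
              have := abs_sub_le En Em IQ; linarith
          _ = |En - IP| + |En - Em| + |Em - IQ| := by rw [abs_sub_comm IP En]; ring
      have hdevT : |En - IP| < cn := by rw [hEn, hIP]; exact hT
      have hdevS : |Em - IQ| < cm := by rw [hEm, hIQ]; exact hS
      have hp0' : D - ε < |IP - IQ| := hp0
      have hrad : 0 ≤ 4 * (q:ℝ) * R :=
        mul_nonneg (by positivity)
          (add_nonneg (empRad_nonneg m ST.1 H) (empRad_nonneg n ST.2 H))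
      have hsum : cn + cm + ε = 3 * M * (sm + sn) := by
        rw [hcn, hcm, hε]; ring
      show D ≤ Ehat + 4 * (q:ℝ) * R + 3 * M * (sm + sn)
      linarith [hp0', htri, hdevT, hdevS, hEsup, hrad, hsum]
    -- final computation
    calc ENNReal.ofReal (1 - δ)
        ≤ ENNReal.ofReal ((1 - δ/2) * (1 - δ/2)) := ENNReal.ofReal_le_ofReal (by nlinarith)
      _ = ENNReal.ofReal (1 - δ/2) * ENNReal.ofReal (1 - δ/2) :=
          ENNReal.ofReal_mul (by linarith)
      _ ≤ ((Measure.pi fun _ : Fin m => Q) Aᶜ) * ((Measure.pi fun _ : Fin n => P) Bᶜ) :=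
          mul_le_mul' hQAc hPBc
      _ = ((Measure.pi fun _ : Fin m => Q).prod (Measure.pi fun _ : Fin n => P)) (Aᶜ ×ˢ Bᶜ) :=
          (Measure.prod_prod _ _).symm
      _ ≤ _ := measure_mono hsub
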